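/- Let α ∈ (0,2) and β < α + 1. Then for every k > 0, lim_{h → ∞} h · ∫_{k√h}^∞ r · e^{β r}(e^r − 1)^{−(α+1)} dr = 0; equivalently, lim_{h → ∞} h^{3/2} ∫_k^∞ r · e^{β r √h}(e^{r√h} − 1)^{−(α+1)} dr = 0. (This is the vanishing of the centering correction outside a ball of fixed radius for the rescaled Lamperti stable Lévy measures, used in the long-time Brownian limit theorem.) -/

import Mathlib

open MeasureTheory Set Filter

private lemma sqrt_tendsto_atTop' : Filter.Tendsto Real.sqrt Filter.atTop Filter.atTop := by
  refine Filter.tendsto_atTop_atTop.2 fun b => ⟨b ^ 2, fun a ha => ?_⟩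
  calc b ≤ |b| := le_abs_self b
  _ = Real.sqrt (b ^ 2) := (Real.sqrt_sq_eq_abs b).symm
  _ ≤ Real.sqrt a := Real.sqrt_le_sqrt ha

private lemma integral_exp_neg_mul_Ioi' {b : ℝ} (hb : 0 < b) (a : ℝ) :
    ∫ x in Set.Ioi a, Real.exp (-b * x) = Real.exp (-b * a) / b := by
  have hderiv : ∀ x ∈ Set.Ici a, HasDerivAt (fun y : ℝ => -Real.exp (-b * y) / b)
      (Real.exp (-b * x)) x := by
    intro x _
    have : HasDerivAt (fun y : ℝ => -b * y) (-b) x := by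
      simpa using (hasDerivAt_id x).const_mul (-b)
    have := (this.exp.neg).div_const b
    convert this using 1
    · rfl
    · rfl
    · rfl
    · rw [eq_div_iff hb.ne']; ring
  have hint : MeasureTheory.IntegrableOn (fun x : ℝ => Real.exp (-b * x)) (Set.Ioi a) :=
    exp_neg_integrableOn_Ioi a hb
  have htend : Filter.Tendsto (fun y : ℝ => -Real.exp (-b * y) / b) Filter.atTop (nhds 0) := by
    have : Filter.Tendsto (fun y : ℝ => Real.exp (-b * y)) Filter.atTop (nhds 0) :=
      Real.tendsto_exp_atBot.comp (tendsto_id.const_mul_atTop_of_neg (by linarith))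
    simpa using (this.neg).div_const b
  have := MeasureTheory.integral_Ioi_of_hasDerivAt_of_tendsto' hderiv hint htend
  rw [this]; ring

theorem lamperti_stable_centering_correction_vanishes
    (α β : ℝ) (hα : α ∈ Set.Ioo (0:ℝ) 2) (hβ : β < α + 1) (k : ℝ) (hk : 0 < k) :
    Filter.Tendsto
      (fun h : ℝ => h * ∫ r in Set.Ioi (k * Real.sqrt h),
        r * Real.exp (β * r) * (Real.exp r - 1) ^ (-(α + 1)))
      Filter.atTop (nhds 0) ∧
    Filter.Tendsto
      (fun h : ℝ => h ^ ((3:ℝ)/2) * ∫ r in Set.Ioi k,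
        r * Real.exp (β * r * Real.sqrt h) * (Real.exp (r * Real.sqrt h) - 1) ^ (-(α + 1)))
      Filter.atTop (nhds 0) := by
  obtain ⟨hα0, hα2⟩ := hα
  set δ : ℝ := α + 1 - β with hδdef
  have hδ : 0 < δ := by simp [hδdef]; linarith
  set C : ℝ := 2 ^ (α + 1) * (2 / δ) with hC
  have hCpos : 0 < C := by positivity
  -- key pointwise bound: for s ≥ 1,
  -- s * exp (β s) * (exp s - 1)^(-(α+1)) ≤ C * exp (-(δ/2) s)
  have key : ∀ s : ℝ, 1 ≤ s →
      s * Real.exp (β * s) * (Real.exp s - 1) ^ (-(α + 1)) ≤ C * Real.exp (-(δ/2) * s) := by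
    intro s hs
    have hs0 : (0:ℝ) < s := by linarith
    have hes : (2:ℝ) ≤ Real.exp s := by
      calc (2:ℝ) ≤ 1 + s := by linarith
      _ ≤ Real.exp s := by linarith [Real.add_one_le_exp s]
    have h1 : Real.exp s / 2 ≤ Real.exp s - 1 := by
      nlinarith [Real.exp_pos s]
    have hpos2 : (0:ℝ) < Real.exp s / 2 := by positivity
    have hbound : (Real.exp s - 1) ^ (-(α + 1)) ≤ (Real.exp s / 2) ^ (-(α + 1)) :=
      Real.rpow_le_rpow_of_nonpos hpos2 h1 (by linarith)
    have hexp_rpow : ∀ y : ℝ, (Real.exp s) ^ y = Real.exp (s * y) := fun y => by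
      rw [Real.rpow_def_of_pos (Real.exp_pos s), Real.log_exp]
    have heq : (Real.exp s / 2) ^ (-(α + 1)) = 2 ^ (α + 1) * Real.exp (-(α + 1) * s) := by
      rw [Real.div_rpow (Real.exp_pos s).le (by norm_num), hexp_rpow,
        Real.rpow_neg (by norm_num : (0:ℝ) ≤ 2), div_inv_eq_mul,
        show s * (-(α + 1)) = -(α + 1) * s from by ring, mul_comm]
    have hsle : s ≤ (2 / δ) * Real.exp ((δ/2) * s) := by
      have := Real.add_one_le_exp ((δ/2) * s)
      have h2 : (δ/2) * s ≤ Real.exp ((δ/2) * s) := by linarith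
      calc s = (2/δ) * ((δ/2) * s) := by field_simp
      _ ≤ (2/δ) * Real.exp ((δ/2) * s) := by
          apply mul_le_mul_of_nonneg_left h2 (by positivity)
    calc s * Real.exp (β * s) * (Real.exp s - 1) ^ (-(α + 1))
        ≤ s * Real.exp (β * s) * (2 ^ (α + 1) * Real.exp (-(α + 1) * s)) := by
          apply mul_le_mul_of_nonneg_left _ (by positivity)
          rw [← heq]; exact hbound
      _ = 2 ^ (α + 1) * (s * (Real.exp (β * s) * Real.exp (-(α + 1) * s))) := by ring
      _ = 2 ^ (α + 1) * (s * Real.exp (-δ * s)) := by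
          rw [← Real.exp_add]
          congr 2
          simp only [hδdef]; ring
      _ ≤ 2 ^ (α + 1) * ((2/δ) * Real.exp ((δ/2) * s) * Real.exp (-δ * s)) := by
          apply mul_le_mul_of_nonneg_left _ (by positivity)
          exact mul_le_mul_of_nonneg_right hsle (Real.exp_pos _).le
      _ = C * Real.exp (-(δ/2) * s) := by
          have h3 : Real.exp ((δ/2)*s) * Real.exp (-δ*s) = Real.exp (-(δ/2)*s) := by
            rw [← Real.exp_add]; congr 1; ring
          rw [hC, ← h3]; ring
  have hδ2 : (0:ℝ) < δ/2 := by linarith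
  have hδ4 : (0:ℝ) < δ/4 := by linarith
  constructor
  · -- Part 1
    apply squeeze_zero' (g := fun h : ℝ =>
      (C / (δ/2)) * ((Real.sqrt h) ^ (2:ℝ) * Real.exp (-(δ/2 * k) * Real.sqrt h)))
    · -- eventual nonnegativity
      filter_upwards [Filter.eventually_ge_atTop (0:ℝ)] with h hh
      apply mul_nonneg hh
      apply MeasureTheory.setIntegral_nonneg measurableSet_Ioi
      intro r hr
      have hr0 : 0 < r := lt_of_le_of_lt (by positivity) hr
      have : (0:ℝ) ≤ Real.exp r - 1 := by
        have := Real.add_one_le_exp r; linarith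
      positivity
    · -- eventual upper bound
      filter_upwards [Filter.eventually_ge_atTop (max 1 (1/k^2))] with h hh
      have hh1 : (1:ℝ) ≤ h := le_trans (le_max_left _ _) hh
      have hh0 : (0:ℝ) ≤ h := by linarith
      have hM1 : (1:ℝ) ≤ k * Real.sqrt h := by
        have h2 : 1/k^2 ≤ h := le_trans (le_max_right _ _) hh
        have : Real.sqrt (1/k^2) ≤ Real.sqrt h := Real.sqrt_le_sqrt h2
        have hs : Real.sqrt (1/k^2) = 1/k := by
          rw [show (1:ℝ)/k^2 = (1/k)^2 by ring, Real.sqrt_sq (by positivity)]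
        rw [hs] at this
        calc (1:ℝ) = k * (1/k) := by field_simp
        _ ≤ k * Real.sqrt h := by exact mul_le_mul_of_nonneg_left this hk.le
      set M := k * Real.sqrt h with hM
      have hInt : ∫ r in Set.Ioi M,
          r * Real.exp (β * r) * (Real.exp r - 1) ^ (-(α + 1))
          ≤ ∫ r in Set.Ioi M, C * Real.exp (-(δ/2) * r) := by
        apply MeasureTheory.integral_mono_of_nonneg
        · refine (MeasureTheory.ae_restrict_iff' measurableSet_Ioi).2 (Filter.Eventually.of_forall fun r hr => ?_)
          have hr0 : 0 < r := lt_of_lt_of_le (by linarith) (le_of_lt hr)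
          have : (0:ℝ) ≤ Real.exp r - 1 := by
            have := Real.add_one_le_exp r; linarith
          positivity
        · exact (exp_neg_integrableOn_Ioi M hδ2).const_mul C
        · refine (MeasureTheory.ae_restrict_iff' measurableSet_Ioi).2 (Filter.Eventually.of_forall fun r hr => ?_)
          exact key r (le_trans hM1 hr.le)
      have hIntVal : ∫ r in Set.Ioi M, C * Real.exp (-(δ/2) * r)
          = C * (Real.exp (-(δ/2) * M) / (δ/2)) := by
        rw [MeasureTheory.integral_const_mul, integral_exp_neg_mul_Ioi' hδ2]
      calc h * ∫ r in Set.Ioi M, r * Real.exp (β * r) * (Real.exp r - 1) ^ (-(α + 1))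
          ≤ h * (C * (Real.exp (-(δ/2) * M) / (δ/2))) := by
            apply mul_le_mul_of_nonneg_left _ hh0
            rw [← hIntVal]; exact hInt
        _ = (C / (δ/2)) * ((Real.sqrt h) ^ (2:ℝ) * Real.exp (-(δ/2 * k) * Real.sqrt h)) := by
            rw [show ((Real.sqrt h) ^ (2:ℝ)) = h by
              rw [show (2:ℝ) = ((2:ℕ):ℝ) by norm_num, Real.rpow_natCast, sq, Real.mul_self_sqrt hh0]]
            rw [hM, show -(δ/2) * (k * Real.sqrt h) = -(δ/2 * k) * Real.sqrt h by ring]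
            ring
    · -- the dominating function tends to 0
      have := (tendsto_rpow_mul_exp_neg_mul_atTop_nhds_zero 2 (δ/2 * k) (by positivity)).comp
        sqrt_tendsto_atTop'
      simpa using this.const_mul (C / (δ/2))
  · -- Part 2
    set C' : ℝ := C * Real.exp (-(δ/4) * k) / (δ/4) with hC'
    have hC'pos : 0 < C' := by positivity
    apply squeeze_zero' (g := fun h : ℝ =>
      C' * ((Real.sqrt h) ^ (3:ℝ) * Real.exp (-(δ/4 * k) * Real.sqrt h)))
    · filter_upwards [Filter.eventually_ge_atTop (0:ℝ)] with h hh
      apply mul_nonneg (Real.rpow_nonneg hh _)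
      apply MeasureTheory.setIntegral_nonneg measurableSet_Ioi
      intro r hr
      have hr0 : 0 < r := lt_trans hk hr
      have hrs : (0:ℝ) ≤ r * Real.sqrt h := by positivity
      have : (0:ℝ) ≤ Real.exp (r * Real.sqrt h) - 1 := by
        have := Real.add_one_le_exp (r * Real.sqrt h); linarith
      positivity
    · filter_upwards [Filter.eventually_ge_atTop (max 1 (1/k^2))] with h hh
      have hh1 : (1:ℝ) ≤ h := le_trans (le_max_left _ _) hh
      have hh0 : (0:ℝ) ≤ h := by linarith
      have hsq1 : (1:ℝ) ≤ Real.sqrt h := by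
        rw [show (1:ℝ) = Real.sqrt 1 by simp]; exact Real.sqrt_le_sqrt hh1
      have hM1 : (1:ℝ) ≤ k * Real.sqrt h := by
        have h2 : 1/k^2 ≤ h := le_trans (le_max_right _ _) hh
        have : Real.sqrt (1/k^2) ≤ Real.sqrt h := Real.sqrt_le_sqrt h2
        have hs : Real.sqrt (1/k^2) = 1/k := by
          rw [show (1:ℝ)/k^2 = (1/k)^2 by ring, Real.sqrt_sq (by positivity)]
        rw [hs] at this
        calc (1:ℝ) = k * (1/k) := by field_simp
        _ ≤ k * Real.sqrt h := by exact mul_le_mul_of_nonneg_left this hk.le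
      -- pointwise bound on Ioi k
      have hptwise : ∀ r ∈ Set.Ioi k,
          r * Real.exp (β * r * Real.sqrt h) * (Real.exp (r * Real.sqrt h) - 1) ^ (-(α + 1))
          ≤ (C * Real.exp (-(δ/4) * (k * Real.sqrt h))) * Real.exp (-(δ/4) * r) := by
        intro r hr
        have hrk : k < r := hr
        have hr0 : 0 < r := lt_trans hk hrk
        set s : ℝ := r * Real.sqrt h with hsdef
        have hs1 : 1 ≤ s := by
          calc (1:ℝ) ≤ k * Real.sqrt h := hM1
          _ ≤ r * Real.sqrt h := by
              apply mul_le_mul_of_nonneg_right hrk.le (by positivity)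
        have hrs : r ≤ s := by
          calc r = r * 1 := (mul_one r).symm
          _ ≤ r * Real.sqrt h := mul_le_mul_of_nonneg_left hsq1 hr0.le
        have hX : (0:ℝ) ≤ Real.exp (β * s) * (Real.exp s - 1) ^ (-(α + 1)) := by
          have : (0:ℝ) ≤ Real.exp s - 1 := by
            have := Real.add_one_le_exp s; linarith
          positivity
        have step1 : r * Real.exp (β * r * Real.sqrt h) * (Real.exp (r * Real.sqrt h) - 1) ^ (-(α + 1))
            ≤ s * Real.exp (β * s) * (Real.exp s - 1) ^ (-(α + 1)) := by
          rw [show β * r * Real.sqrt h = β * s by rw [hsdef]; ring]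
          calc r * Real.exp (β * s) * (Real.exp s - 1) ^ (-(α + 1))
              = r * (Real.exp (β * s) * (Real.exp s - 1) ^ (-(α + 1))) := by ring
            _ ≤ s * (Real.exp (β * s) * (Real.exp s - 1) ^ (-(α + 1))) :=
                mul_le_mul_of_nonneg_right hrs hX
            _ = s * Real.exp (β * s) * (Real.exp s - 1) ^ (-(α + 1)) := by ring
        have step2 : s * Real.exp (β * s) * (Real.exp s - 1) ^ (-(α + 1))
            ≤ C * Real.exp (-(δ/2) * s) := key s hs1
        have step3 : Real.exp (-(δ/2) * s) ≤
            Real.exp (-(δ/4) * (k * Real.sqrt h)) * Real.exp (-(δ/4) * r) := by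
          rw [← Real.exp_add]
          apply Real.exp_le_exp.2
          have e1 : k * Real.sqrt h ≤ s := by
            rw [hsdef]; exact mul_le_mul_of_nonneg_right hrk.le (by positivity)
          have e2 : r ≤ s := hrs
          nlinarith
        calc r * Real.exp (β * r * Real.sqrt h) * (Real.exp (r * Real.sqrt h) - 1) ^ (-(α + 1))
            ≤ C * Real.exp (-(δ/2) * s) := le_trans step1 step2
          _ ≤ C * (Real.exp (-(δ/4) * (k * Real.sqrt h)) * Real.exp (-(δ/4) * r)) :=
              mul_le_mul_of_nonneg_left step3 hCpos.le
          _ = (C * Real.exp (-(δ/4) * (k * Real.sqrt h))) * Real.exp (-(δ/4) * r) := by ring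
      have hInt : ∫ r in Set.Ioi k,
          r * Real.exp (β * r * Real.sqrt h) * (Real.exp (r * Real.sqrt h) - 1) ^ (-(α + 1))
          ≤ ∫ r in Set.Ioi k,
            (C * Real.exp (-(δ/4) * (k * Real.sqrt h))) * Real.exp (-(δ/4) * r) := by
        apply MeasureTheory.integral_mono_of_nonneg
        · refine (MeasureTheory.ae_restrict_iff' measurableSet_Ioi).2 (Filter.Eventually.of_forall fun r hr => ?_)
          have hr0 : 0 < r := lt_trans hk hr
          have hrs : (0:ℝ) ≤ r * Real.sqrt h := by positivity
          have : (0:ℝ) ≤ Real.exp (r * Real.sqrt h) - 1 := by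
            have := Real.add_one_le_exp (r * Real.sqrt h); linarith
          positivity
        · exact (exp_neg_integrableOn_Ioi k hδ4).const_mul _
        · exact (MeasureTheory.ae_restrict_iff' measurableSet_Ioi).2
            (Filter.Eventually.of_forall hptwise)
      have hIntVal : ∫ r in Set.Ioi k,
          (C * Real.exp (-(δ/4) * (k * Real.sqrt h))) * Real.exp (-(δ/4) * r)
          = (C * Real.exp (-(δ/4) * (k * Real.sqrt h))) * (Real.exp (-(δ/4) * k) / (δ/4)) := by
        rw [MeasureTheory.integral_const_mul, integral_exp_neg_mul_Ioi' hδ4]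
      have hpow : h ^ ((3:ℝ)/2) = (Real.sqrt h) ^ (3:ℝ) := by
        rw [Real.sqrt_eq_rpow, ← Real.rpow_mul hh0]
        norm_num
      calc h ^ ((3:ℝ)/2) * ∫ r in Set.Ioi k,
            r * Real.exp (β * r * Real.sqrt h) * (Real.exp (r * Real.sqrt h) - 1) ^ (-(α + 1))
          ≤ h ^ ((3:ℝ)/2) *
            ((C * Real.exp (-(δ/4) * (k * Real.sqrt h))) * (Real.exp (-(δ/4) * k) / (δ/4))) := by
            apply mul_le_mul_of_nonneg_left _ (Real.rpow_nonneg hh0 _)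
            rw [← hIntVal]; exact hInt
        _ = C' * ((Real.sqrt h) ^ (3:ℝ) * Real.exp (-(δ/4 * k) * Real.sqrt h)) := by
            rw [hpow, hC', show -(δ/4) * (k * Real.sqrt h) = -(δ/4 * k) * Real.sqrt h by ring]
            ring
    · have := (tendsto_rpow_mul_exp_neg_mul_atTop_nhds_zero 3 (δ/4 * k) (by positivity)).comp
        sqrt_tendsto_atTop'
      simpa using this.const_mul C'
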